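/- The following four identities hold in End(V): (qAK* − q^{−1}K*A)/(q − q^{−1}) = a·I, (qK*^{−1}B − q^{−1}BK*^{−1})/(q − q^{−1}) = b·I, (qA*K*^{−1} − q^{−1}K*^{−1}A*)/(q − q^{−1}) = a*·I, and (qK*B* − q^{−1}B*K*)/(q − q^{−1}) = b*·I. -/

import Mathlib

noncomputable section

open Submodule

variable {K : Type*} [Field K]

/-- `[n]_q = (q^n − q^{−n})/(q − q^{−1})`. -/
def qInt (q : K) (n : ℤ) : K := (q ^ n - q ^ (-n)) / (q - q⁻¹)

/-- Elements `y₀⁺, y₁⁺, y₀⁻, y₁⁻, k₀, k₀⁻¹, k₁, k₁⁻¹` of a unital associative `K`-algebra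
satisfy the alternate relations. -/
structure AlternateRelations (q : K) {A : Type*} [Ring A] [Algebra K A]
    (yp ym k kinv : Fin 2 → A) : Prop where
  k_kinv : ∀ i, k i * kinv i = 1
  kinv_k : ∀ i, kinv i * k i = 1
  central_yp : ∀ i, k 0 * k 1 * yp i = yp i * (k 0 * k 1)
  central_ym : ∀ i, k 0 * k 1 * ym i = ym i * (k 0 * k 1)
  central_k : ∀ i, k 0 * k 1 * k i = k i * (k 0 * k 1)
  central_kinv : ∀ i, k 0 * k 1 * kinv i = kinv i * (k 0 * k 1)
  rel_yp_k : ∀ i, (q - q⁻¹)⁻¹ • (q • (yp i * k i) - q⁻¹ • (k i * yp i)) = 1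
  rel_k_ym : ∀ i, (q - q⁻¹)⁻¹ • (q • (k i * ym i) - q⁻¹ • (ym i * k i)) = 1
  rel_ym_yp : ∀ i, (q - q⁻¹)⁻¹ • (q • (ym i * yp i) - q⁻¹ • (yp i * ym i)) = 1
  rel_yp_ym : ∀ i j, i ≠ j →
    (q - q⁻¹)⁻¹ • (q • (yp i * ym j) - q⁻¹ • (ym j * yp i)) = kinv 0 * kinv 1
  serre_p : ∀ i j, i ≠ j →
    yp i ^ 3 * yp j - qInt q 3 • (yp i ^ 2 * yp j * yp i)
      + qInt q 3 • (yp i * yp j * yp i ^ 2) - yp j * yp i ^ 3 = 0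
  serre_m : ∀ i j, i ≠ j →
    ym i ^ 3 * ym j - qInt q 3 • (ym i ^ 2 * ym j * ym i)
      + qInt q 3 • (ym i * ym j * ym i ^ 2) - ym j * ym i ^ 3 = 0

/-- Elements `e₀⁺, e₁⁺, e₀⁻, e₁⁻, K₀, K₀⁻¹, K₁, K₁⁻¹` of a unital associative `K`-algebra
satisfy the Chevalley relations of `U_q(sl₂ hat)`. -/
structure ChevalleyRelations (q : K) {A : Type*} [Ring A] [Algebra K A]
    (ep em Kg Kginv : Fin 2 → A) : Prop where
  K_Kinv : ∀ i, Kg i * Kginv i = 1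
  Kinv_K : ∀ i, Kginv i * Kg i = 1
  K_comm : Kg 0 * Kg 1 = Kg 1 * Kg 0
  KepK_same : ∀ i, Kg i * ep i * Kginv i = (q ^ (2 : ℤ)) • ep i
  KemK_same : ∀ i, Kg i * em i * Kginv i = (q ^ (-2 : ℤ)) • em i
  KepK_diff : ∀ i j, i ≠ j → Kg i * ep j * Kginv i = (q ^ (-2 : ℤ)) • ep j
  KemK_diff : ∀ i j, i ≠ j → Kg i * em j * Kginv i = (q ^ (2 : ℤ)) • em j
  e_comm_same : ∀ i, ep i * em i - em i * ep i = (q - q⁻¹)⁻¹ • (Kg i - Kginv i)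
  e_comm_diff : ∀ i j, i ≠ j → ep i * em j = em j * ep i
  serre_p : ∀ i j, i ≠ j →
    ep i ^ 3 * ep j - qInt q 3 • (ep i ^ 2 * ep j * ep i)
      + qInt q 3 • (ep i * ep j * ep i ^ 2) - ep j * ep i ^ 3 = 0
  serre_m : ∀ i j, i ≠ j →
    em i ^ 3 * em j - qInt q 3 • (em i ^ 2 * em j * em i)
      + qInt q 3 • (em i * em j * em i ^ 2) - em j * em i ^ 3 = 0

variable {V : Type*} [AddCommGroup V] [Module K V]

/-- A decomposition of `V` of length `d`: nonzero subspaces `U 0, …, U d`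
(indexed by `ℤ`, with `U i = ⊥` outside `[0, d]`) whose direct sum is `V`. -/
structure IsDecomposition (d : ℕ) (U : ℤ → Submodule K V) : Prop where
  bot_of_lt : ∀ i : ℤ, i < 0 → U i = ⊥
  bot_of_gt : ∀ i : ℤ, (d : ℤ) < i → U i = ⊥
  ne_bot : ∀ i : ℤ, 0 ≤ i → i ≤ (d : ℤ) → U i ≠ ⊥
  indep : iSupIndep U
  sup_eq_top : ⨆ i, U i = ⊤

/-- `A, A*` is a tridiagonal pair on `V` with standard orderings `Vs 0, …, Vs d` and
`Vs' 0, …, Vs' d` of the eigenspaces of `A` resp. `A*`, with corresponding eigenvalues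
`θ i` resp. `θ' i`. -/
structure IsTridiagonalPair (A A' : Module.End K V) (d : ℕ)
    (Vs Vs' : ℤ → Submodule K V) (θ θ' : ℤ → K) : Prop where
  decompV : IsDecomposition d Vs
  decompV' : IsDecomposition d Vs'
  eig : ∀ i : ℤ, ∀ v ∈ Vs i, A v = θ i • v
  eig' : ∀ i : ℤ, ∀ v ∈ Vs' i, A' v = θ' i • v
  theta_inj : ∀ i j : ℤ, 0 ≤ i → i ≤ (d : ℤ) → 0 ≤ j → j ≤ (d : ℤ) → θ i = θ j → i = j
  theta'_inj : ∀ i j : ℤ, 0 ≤ i → i ≤ (d : ℤ) → 0 ≤ j → j ≤ (d : ℤ) → θ' i = θ' j → i = j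
  trid : ∀ i : ℤ, (Vs i).map A' ≤ Vs (i - 1) ⊔ Vs i ⊔ Vs (i + 1)
  trid' : ∀ i : ℤ, (Vs' i).map A ≤ Vs' (i - 1) ⊔ Vs' i ⊔ Vs' (i + 1)
  irred : ∀ W : Submodule K V, W.map A ≤ W → W.map A' ≤ W → W = ⊥ ∨ W = ⊤

/-- The sum `U m + U (m+1) + ⋯ + U n`. -/
def sumIcc (U : ℤ → Submodule K V) (m n : ℤ) : Submodule K V :=
  ⨆ j ∈ Set.Icc m n, U j

/-- Decomposition `[0D]`: the `i`-th subspace is `V_i`. -/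
def dec0D (Vs : ℤ → Submodule K V) : ℤ → Submodule K V := Vs

/-- Decomposition `[0*D*]`: the `i`-th subspace is `V*_i`. -/
def dec0sDs (Vs' : ℤ → Submodule K V) : ℤ → Submodule K V := Vs'

/-- Decomposition `[0*D]`: the `i`-th subspace is `(V*_0+⋯+V*_i) ∩ (V_i+⋯+V_d)`. -/
def dec0sD (d : ℕ) (Vs Vs' : ℤ → Submodule K V) (i : ℤ) : Submodule K V :=
  sumIcc Vs' 0 i ⊓ sumIcc Vs i (d : ℤ)

/-- Decomposition `[0*0]`: the `i`-th subspace is `(V*_0+⋯+V*_i) ∩ (V_0+⋯+V_{d−i})`. -/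
def dec0s0 (d : ℕ) (Vs Vs' : ℤ → Submodule K V) (i : ℤ) : Submodule K V :=
  sumIcc Vs' 0 i ⊓ sumIcc Vs 0 ((d : ℤ) - i)

/-- Decomposition `[D*0]`: the `i`-th subspace is `(V*_{d−i}+⋯+V*_d) ∩ (V_0+⋯+V_{d−i})`. -/
def decDs0 (d : ℕ) (Vs Vs' : ℤ → Submodule K V) (i : ℤ) : Submodule K V :=
  sumIcc Vs' ((d : ℤ) - i) (d : ℤ) ⊓ sumIcc Vs 0 ((d : ℤ) - i)

/-- Decomposition `[D*D]`: the `i`-th subspace is `(V*_{d−i}+⋯+V*_d) ∩ (V_i+⋯+V_d)`. -/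
def decDsD (d : ℕ) (Vs Vs' : ℤ → Submodule K V) (i : ℤ) : Submodule K V :=
  sumIcc Vs' ((d : ℤ) - i) (d : ℤ) ⊓ sumIcc Vs i (d : ℤ)


/-! ### Auxiliary lemmas for Statement 9 -/

section Stmt9Aux

variable {K : Type*} [Field K] {V : Type*} [AddCommGroup V] [Module K V]

lemma le_sumIcc (U : ℤ → Submodule K V) {j m n : ℤ} (h1 : m ≤ j) (h2 : j ≤ n) :
    U j ≤ sumIcc U m n :=
  le_biSup U (Set.mem_Icc.mpr ⟨h1, h2⟩)

lemma sumIcc_le (U : ℤ → Submodule K V) {m n : ℤ} {W : Submodule K V}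
    (h : ∀ j : ℤ, m ≤ j → j ≤ n → U j ≤ W) : sumIcc U m n ≤ W :=
  iSup₂_le fun j hj => h j hj.1 hj.2

lemma sumIcc_mono (U : ℤ → Submodule K V) {m n m' n' : ℤ} (h1 : m' ≤ m) (h2 : n ≤ n') :
    sumIcc U m n ≤ sumIcc U m' n' :=
  sumIcc_le U fun j hj1 hj2 => le_sumIcc U (h1.trans hj1) (hj2.trans h2)

lemma sumIcc_eq_bot (U : ℤ → Submodule K V) {m n : ℤ} (h : n < m) : sumIcc U m n = ⊥ := by
  unfold sumIcc
  rw [Set.Icc_eq_empty (not_le.mpr h), iSup_emptyset]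

lemma sumIcc_self (U : ℤ → Submodule K V) (m : ℤ) : sumIcc U m m = U m := by
  unfold sumIcc
  rw [Set.Icc_self, iSup_singleton]

lemma IsDecomposition.sumIcc_eq_top {d : ℕ} {U : ℤ → Submodule K V}
    (hdec : IsDecomposition d U) : sumIcc U 0 (d : ℤ) = ⊤ := by
  refine top_unique ?_
  rw [← hdec.sup_eq_top]
  refine iSup_le fun i => ?_
  by_cases h1 : 0 ≤ i
  · by_cases h2 : i ≤ (d : ℤ)
    · exact le_sumIcc U h1 h2
    · rw [hdec.bot_of_gt i (by omega)]; exact bot_le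
  · rw [hdec.bot_of_lt i (by omega)]; exact bot_le

/-- If `F` acts on each `U m` by the scalar `μ m`, then `F - μ n` maps the
flag `U m + ⋯ + U n` into `U m + ⋯ + U (n-1)`. -/
lemma eig_map_le_lower (U : ℤ → Submodule K V) (F : Module.End K V) (μ : ℤ → K)
    (heig : ∀ m : ℤ, ∀ v ∈ U m, F v = μ m • v) (m n : ℤ) {v : V} (hv : v ∈ sumIcc U m n) :
    F v - μ n • v ∈ sumIcc U m (n - 1) := by
  have : Submodule.map (F - μ n • (1 : Module.End K V)) (sumIcc U m n) ≤ sumIcc U m (n - 1) := by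
    unfold sumIcc
    rw [Submodule.map_iSup]
    refine iSup_le fun j => ?_
    rw [Submodule.map_iSup]
    refine iSup_le fun hj => ?_
    obtain ⟨hj1, hj2⟩ := Set.mem_Icc.mp hj
    rintro x ⟨w, hw, rfl⟩
    have hx : (F - μ n • (1 : Module.End K V)) w = (μ j - μ n) • w := by
      simp [LinearMap.sub_apply, LinearMap.smul_apply, heig j w hw, sub_smul]
    rw [hx]
    by_cases hjn : j = n
    · subst hjn; simp
    · exact Submodule.smul_mem _ _ (le_sumIcc U hj1 (by omega : j ≤ n - 1) hw)
  have := this (Submodule.mem_map_of_mem (f := F - μ n • (1 : Module.End K V)) hv)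
  simpa [LinearMap.sub_apply, LinearMap.smul_apply] using this

/-- If `F` acts on each `U m` by the scalar `μ m`, then `F - μ m` maps the
flag `U m + ⋯ + U n` into `U (m+1) + ⋯ + U n`. -/
lemma eig_map_le_upper (U : ℤ → Submodule K V) (F : Module.End K V) (μ : ℤ → K)
    (heig : ∀ m : ℤ, ∀ v ∈ U m, F v = μ m • v) (m n : ℤ) {v : V} (hv : v ∈ sumIcc U m n) :
    F v - μ m • v ∈ sumIcc U (m + 1) n := by
  have : Submodule.map (F - μ m • (1 : Module.End K V)) (sumIcc U m n) ≤ sumIcc U (m + 1) n := by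
    unfold sumIcc
    rw [Submodule.map_iSup]
    refine iSup_le fun j => ?_
    rw [Submodule.map_iSup]
    refine iSup_le fun hj => ?_
    obtain ⟨hj1, hj2⟩ := Set.mem_Icc.mp hj
    rintro x ⟨w, hw, rfl⟩
    have hx : (F - μ m • (1 : Module.End K V)) w = (μ j - μ m) • w := by
      simp [LinearMap.sub_apply, LinearMap.smul_apply, heig j w hw, sub_smul]
    rw [hx]
    by_cases hjm : j = m
    · subst hjm; simp
    · exact Submodule.smul_mem _ _ (le_sumIcc U (by omega : m + 1 ≤ j) hj2 hw)
  have := this (Submodule.mem_map_of_mem (f := F - μ m • (1 : Module.End K V)) hv)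
  simpa [LinearMap.sub_apply, LinearMap.smul_apply] using this

/-- A tridiagonal operator maps the flag `U 0 + ⋯ + U n` into `U 0 + ⋯ + U (n+1)`. -/
lemma trid_map_le_lower {d : ℕ} {U : ℤ → Submodule K V} (hdec : IsDecomposition d U)
    (G : Module.End K V) (htrid : ∀ i : ℤ, (U i).map G ≤ U (i - 1) ⊔ U i ⊔ U (i + 1))
    (n : ℤ) : Submodule.map G (sumIcc U 0 n) ≤ sumIcc U 0 (n + 1) := by
  unfold sumIcc
  rw [Submodule.map_iSup]
  refine iSup_le fun j => ?_
  rw [Submodule.map_iSup]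
  refine iSup_le fun hj => ?_
  obtain ⟨hj1, hj2⟩ := Set.mem_Icc.mp hj
  refine le_trans (htrid j) ?_
  refine sup_le (sup_le ?_ ?_) ?_
  · by_cases h : j = 0
    · subst h; rw [hdec.bot_of_lt _ (by omega)]; exact bot_le
    · exact le_sumIcc U (by omega) (by omega)
  · exact le_sumIcc U hj1 (by omega)
  · exact le_sumIcc U (by omega) (by omega)

/-- A tridiagonal operator maps the flag `U m + ⋯ + U d` into `U (m-1) + ⋯ + U d`. -/
lemma trid_map_le_upper {d : ℕ} {U : ℤ → Submodule K V} (hdec : IsDecomposition d U)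
    (G : Module.End K V) (htrid : ∀ i : ℤ, (U i).map G ≤ U (i - 1) ⊔ U i ⊔ U (i + 1))
    (m : ℤ) : Submodule.map G (sumIcc U m (d : ℤ)) ≤ sumIcc U (m - 1) (d : ℤ) := by
  unfold sumIcc
  rw [Submodule.map_iSup]
  refine iSup_le fun j => ?_
  rw [Submodule.map_iSup]
  refine iSup_le fun hj => ?_
  obtain ⟨hj1, hj2⟩ := Set.mem_Icc.mp hj
  refine le_trans (htrid j) ?_
  refine sup_le (sup_le ?_ ?_) ?_
  · exact le_sumIcc U (by omega) (by omega)
  · exact le_sumIcc U (by omega) hj2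
  · by_cases h : j = (d : ℤ)
    · subst h; rw [hdec.bot_of_gt _ (by omega)]; exact bot_le
    · exact le_sumIcc U (by omega) (by omega)

/-- In an independent family, a finite sum of members that vanishes has all terms zero. -/
lemma zsum {U : ℤ → Submodule K V} (hind : iSupIndep U) {s : Finset ℤ} {x : ℤ → V}
    (hx : ∀ m, x m ∈ U m) (hsum : ∑ m ∈ s, x m = 0) : ∀ m ∈ s, x m = 0 := by
  intro m hm
  have h1 : x m + ∑ m' ∈ s.erase m, x m' = 0 := by
    rw [Finset.add_sum_erase s x hm]; exact hsum
  have h2 : x m ∈ U m ⊓ ⨆ j ≠ m, U j := by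
    refine ⟨hx m, ?_⟩
    have hxm : x m = - ∑ m' ∈ s.erase m, x m' := by
      rw [eq_neg_iff_add_eq_zero]; exact h1
    rw [hxm]
    refine neg_mem (Submodule.sum_mem _ fun m' hm' => ?_)
    have hne : m' ≠ m := Finset.ne_of_mem_erase hm'
    exact Submodule.mem_iSup_of_mem m' (Submodule.mem_iSup_of_mem hne (hx m'))
  have := (hind m).le_bot h2
  simpa using this

/-- Component lemma: if `F u - c • u` lies in `U i` and `c` is an eigenvalue only possibly
at index `k`, then `u ∈ U i ⊔ U k`. -/
lemma comp_lemma {d : ℕ} {U : ℤ → Submodule K V} (hdec : IsDecomposition d U)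
    (F : Module.End K V) (μ : ℤ → K) (heig : ∀ m : ℤ, ∀ v ∈ U m, F v = μ m • v)
    (c : K) (i k : ℤ) (hc : ∀ m : ℤ, 0 ≤ m → m ≤ (d : ℤ) → μ m = c → m = i ∨ m = k)
    (u : V) (hu : F u - c • u ∈ U i) : u ∈ U i ⊔ U k := by
  obtain ⟨f, hf, hsum⟩ := (Submodule.mem_iSup_iff_exists_finsupp U u).mp
    (by rw [hdec.sup_eq_top]; trivial)
  have hsum' : ∑ m ∈ f.support, f m = u := hsum
  have hexp : F u - c • u = ∑ m ∈ f.support, (μ m - c) • f m := by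
    rw [← hsum']
    rw [map_sum, Finset.smul_sum]
    rw [← Finset.sum_sub_distrib]
    refine Finset.sum_congr rfl fun m hm => ?_
    rw [heig m (f m) (hf m), sub_smul]
  -- zero-sum on s := insert i f.support
  set x : ℤ → V := fun m => if m = i then (μ i - c) • f i - (F u - c • u) else (μ m - c) • f m
    with hx_def
  have hxmem : ∀ m, x m ∈ U m := by
    intro m
    by_cases hmi : m = i
    · subst hmi
      simp only [hx_def, if_pos rfl]
      exact Submodule.sub_mem _ (Submodule.smul_mem _ _ (hf _)) hu
    · simp only [hx_def, if_neg hmi]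
      exact Submodule.smul_mem _ _ (hf m)
  have hxsum : ∑ m ∈ insert i f.support, x m = 0 := by
    have h1 : ∑ m ∈ insert i f.support, (μ m - c) • f m = F u - c • u := by
      rw [hexp]
      by_cases hi : i ∈ f.support
      · rw [Finset.insert_eq_self.mpr hi]
      · rw [Finset.sum_insert hi]
        have : f i = 0 := Finsupp.notMem_support_iff.mp hi
        rw [this, smul_zero, zero_add]
    have h2 : ∑ m ∈ insert i f.support, x m
        = (∑ m ∈ insert i f.support, (μ m - c) • f m) - (F u - c • u) := by
      rw [← Finset.sum_erase_add _ _ (Finset.mem_insert_self i f.support),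
          ← Finset.sum_erase_add _ _ (Finset.mem_insert_self i f.support)]
      have h3 : ∑ m ∈ (insert i f.support).erase i, x m
          = ∑ m ∈ (insert i f.support).erase i, (μ m - c) • f m := by
        refine Finset.sum_congr rfl fun m hm => ?_
        have : m ≠ i := Finset.ne_of_mem_erase hm
        simp only [hx_def, if_neg this]
      rw [h3]
      simp only [hx_def, if_pos rfl]
      abel
    rw [h2, h1, sub_self]
  have hzero := zsum hdec.indep hxmem hxsum
  have hsupp : ∀ m ∈ f.support, m = i ∨ m = k := by
    intro m hm
    by_contra hcon
    push_neg at hcon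
    have hx0 : x m = 0 := hzero m (Finset.mem_insert_of_mem hm)
    have hfm : f m ≠ 0 := Finsupp.mem_support_iff.mp hm
    have hrange : 0 ≤ m ∧ m ≤ (d : ℤ) := by
      by_contra hr
      push_neg at hr
      have : U m = ⊥ := by
        rcases lt_or_ge m 0 with h | h
        · exact hdec.bot_of_lt m h
        · exact hdec.bot_of_gt m (hr h)
      have h' := hf m
      rw [this] at h'
      exact hfm (by simpa using h')
    have hmu : μ m ≠ c := fun h => by
      rcases hc m hrange.1 hrange.2 h with h' | h'
      · exact hcon.1 h'
      · exact hcon.2 h'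
    simp only [hx_def, if_neg hcon.1] at hx0
    rcases smul_eq_zero.mp hx0 with h | h
    · exact hmu (sub_eq_zero.mp h)
    · exact hfm h
  rw [← hsum']
  refine Submodule.sum_mem _ fun m hm => ?_
  rcases hsupp m hm with h | h
  · subst h; exact Submodule.mem_sup_left (hf m)
  · subst h; exact Submodule.mem_sup_right (hf m)

/-- A family of subspaces with raising/lowering properties sums to an invariant subspace,
hence to `⊥` or `⊤`. -/
lemma pieces_bot_or_top (A A' : Module.End K V)
    (hirr : ∀ W : Submodule K V, W.map A ≤ W → W.map A' ≤ W → W = ⊥ ∨ W = ⊤)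
    (piece : ℤ → Submodule K V) (cA cA' : ℤ → K) (εA εA' : ℤ)
    (hraise : ∀ i : ℤ, ∀ v ∈ piece i, A v - cA i • v ∈ piece (i + εA))
    (hlower : ∀ i : ℤ, ∀ v ∈ piece i, A' v - cA' i • v ∈ piece (i + εA')) :
    (⨆ i, piece i) = ⊥ ∨ (⨆ i, piece i) = ⊤ := by
  refine hirr _ ?_ ?_
  · rw [Submodule.map_iSup]
    refine iSup_le fun i => ?_
    rintro x ⟨v, hv, rfl⟩
    have h1 := hraise i v hv
    have : A v = (A v - cA i • v) + cA i • v := by abel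
    rw [this]
    exact Submodule.add_mem _ (Submodule.mem_iSup_of_mem (i + εA) h1)
      (Submodule.smul_mem _ _ (Submodule.mem_iSup_of_mem i hv))
  · rw [Submodule.map_iSup]
    refine iSup_le fun i => ?_
    rintro x ⟨v, hv, rfl⟩
    have h1 := hlower i v hv
    have : A' v = (A' v - cA' i • v) + cA' i • v := by abel
    rw [this]
    exact Submodule.add_mem _ (Submodule.mem_iSup_of_mem (i + εA') h1)
      (Submodule.smul_mem _ _ (Submodule.mem_iSup_of_mem i hv))

/-- Master computation: a `q`-Weyl-type relation between a diagonal operator `X` and an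
operator `Y` that shifts the decomposition by `ε`. -/
lemma master_rel (q : K) (U : ℤ → Submodule K V) (htop : (⨆ i, U i) = ⊤)
    (X Y : Module.End K V) (s g : ℤ → K) (ε : ℤ) (r : K)
    (hX : ∀ i : ℤ, ∀ v ∈ U i, X v = s i • v)
    (hshift : ∀ i : ℤ, ∀ v ∈ U i, Y v - g i • v ∈ U (i + ε))
    (hs : ∀ i : ℤ, q * s i = q⁻¹ * s (i + ε))
    (hg : ∀ i : ℤ, g i * s i = r) :
    q • (Y * X) - q⁻¹ • (X * Y) = ((q - q⁻¹) * r) • (1 : Module.End K V) := by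
  ext v
  have hv : v ∈ ⨆ i, U i := by rw [htop]; trivial
  show (q • (Y * X) - q⁻¹ • (X * Y)) v = ((q - q⁻¹) * r) • v
  refine Submodule.iSup_induction U (motive := fun x =>
    (q • (Y * X) - q⁻¹ • (X * Y)) x = ((q - q⁻¹) * r) • x) hv ?_ (by simp) ?_
  · intro i v hv
    have hXv := hX i v hv
    obtain ⟨w, hw, hYv⟩ : ∃ w, w ∈ U (i + ε) ∧ Y v = g i • v + w :=
      ⟨_, hshift i v hv, by abel⟩
    have hXw := hX (i + ε) w hw
    clear hw
    simp only [LinearMap.sub_apply, LinearMap.smul_apply, Module.End.mul_apply]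
    rw [hXv, map_smul, hYv, map_add, map_smul, hXv, hXw]
    match_scalars
    · linear_combination (q - q⁻¹) * hg i
    · linear_combination hs i
  · intro x y hx hy
    simp only [map_add, hx, hy, smul_add]
lemma zpow_mul_cancel {K : Type*} [Field K] {q : K} (hq0 : q ≠ 0) (m n : ℤ) (h : m + n = 0) :
    q ^ m * q ^ n = 1 := by
  rw [← zpow_add₀ hq0, h, zpow_zero]

lemma q_shift {K : Type*} [Field K] {q : K} (hq0 : q ≠ 0) (m n : ℤ) (h : 1 + m = -1 + n) :
    q * q ^ m = q⁻¹ * q ^ n := by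
  have h1 : q * q ^ m = q ^ (1 + m) := by rw [zpow_add₀ hq0, zpow_one]
  have h2 : q⁻¹ * q ^ n = q ^ (-1 + n) := by rw [zpow_add₀ hq0, zpow_neg_one]
  rw [h1, h2, h]

lemma q_shift' {K : Type*} [Field K] {q : K} (hq0 : q ≠ 0) (c : K) (m n : ℤ)
    (h : 1 + m = -1 + n) : q * (c * q ^ m) = q⁻¹ * (c * q ^ n) := by
  have h1 : q * (c * q ^ m) = c * (q * q ^ m) := by ring
  have h2 : q⁻¹ * (c * q ^ n) = c * (q⁻¹ * q ^ n) := by ring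
  rw [h1, h2, q_shift hq0 m n h]

lemma map_sumIcc_le (F : Module.End K V) (U : ℤ → Submodule K V) (m n : ℤ) (W : Submodule K V)
    (h : ∀ j, m ≤ j → j ≤ n → ∀ v ∈ U j, F v ∈ W) :
    Submodule.map F (sumIcc U m n) ≤ W := by
  unfold sumIcc
  rw [Submodule.map_iSup]
  refine iSup_le fun j => ?_
  rw [Submodule.map_iSup]
  refine iSup_le fun hj => ?_
  rintro x ⟨v, hv, rfl⟩
  exact h j hj.1 hj.2 v hv

lemma map_biSup_Iic_le (F : Module.End K V) (U : ℤ → Submodule K V) (i : ℤ) (W : Submodule K V)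
    (h : ∀ j, j ≤ i → ∀ v ∈ U j, F v ∈ W) :
    Submodule.map F (⨆ j ∈ Set.Iic i, U j) ≤ W := by
  rw [Submodule.map_iSup]
  refine iSup_le fun j => ?_
  rw [Submodule.map_iSup]
  refine iSup_le fun hj => ?_
  rintro x ⟨v, hv, rfl⟩
  exact h j hj v hv

lemma map_biSup_Ici_le (F : Module.End K V) (U : ℤ → Submodule K V) (i : ℤ) (W : Submodule K V)
    (h : ∀ j, i ≤ j → ∀ v ∈ U j, F v ∈ W) :
    Submodule.map F (⨆ j ∈ Set.Ici i, U j) ≤ W := by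
  rw [Submodule.map_iSup]
  refine iSup_le fun j => ?_
  rw [Submodule.map_iSup]
  refine iSup_le fun hj => ?_
  rintro x ⟨v, hv, rfl⟩
  exact h j hj v hv

end Stmt9Aux
/-- the four relations involving `A, A*, B, B*` and `K*`. -/
theorem stmt9 {K : Type*} [Field K] [IsAlgClosed K]
    {V : Type*} [AddCommGroup V] [Module K V] [FiniteDimensional K V] [Nontrivial V]
    (q : K) (hq0 : q ≠ 0) (hq : ∀ n : ℕ, 0 < n → q ^ n ≠ 1)
    (A A' : Module.End K V) (d : ℕ) (Vs Vs' : ℤ → Submodule K V) (θ θ' : ℤ → K)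
    (hTD : IsTridiagonalPair A A' d Vs Vs' θ θ')
    (a a' : K) (ha : a ≠ 0) (ha' : a' ≠ 0)
    (hθ : ∀ i : ℤ, 0 ≤ i → i ≤ (d : ℤ) → θ i = a * q ^ (2 * i - (d : ℤ)))
    (hθ' : ∀ i : ℤ, 0 ≤ i → i ≤ (d : ℤ) → θ' i = a' * q ^ ((d : ℤ) - 2 * i))
    (b b' : K) (hb : b ≠ 0) (hb' : b' ≠ 0)
    (B : Module.End K V)
    (hB : ∀ i : ℤ, 0 ≤ i → i ≤ (d : ℤ) → ∀ v ∈ dec0s0 d Vs Vs' i,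
      B v = (b * q ^ (2 * i - (d : ℤ))) • v)
    (B' : Module.End K V)
    (hB' : ∀ i : ℤ, 0 ≤ i → i ≤ (d : ℤ) → ∀ v ∈ decDsD d Vs Vs' i,
      B' v = (b' * q ^ ((d : ℤ) - 2 * i)) • v)
    (Kop : Module.End K V)
    (hKop : ∀ i : ℤ, 0 ≤ i → i ≤ (d : ℤ) → ∀ v ∈ dec0sD d Vs Vs' i,
      Kop v = (q ^ (2 * i - (d : ℤ))) • v)
    (Ks : Module.End K V)
    (hKs : ∀ i : ℤ, 0 ≤ i → i ≤ (d : ℤ) → ∀ v ∈ decDs0 d Vs Vs' i,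
      Ks v = (q ^ (2 * i - (d : ℤ))) • v)
    (Kinv Ksinv : Module.End K V)
    (hKinv1 : Kop * Kinv = 1) (hKinv2 : Kinv * Kop = 1)
    (hKsinv1 : Ks * Ksinv = 1) (hKsinv2 : Ksinv * Ks = 1)
    :
    (q - q⁻¹)⁻¹ • (q • (A * Ks) - q⁻¹ • (Ks * A)) = a • (1 : Module.End K V) ∧
    (q - q⁻¹)⁻¹ • (q • (Ksinv * B) - q⁻¹ • (B * Ksinv)) = b • (1 : Module.End K V) ∧
    (q - q⁻¹)⁻¹ • (q • (A' * Ksinv) - q⁻¹ • (Ksinv * A')) = a' • (1 : Module.End K V) ∧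
    (q - q⁻¹)⁻¹ • (q • (Ks * B') - q⁻¹ • (B' * Ks)) = b' • (1 : Module.End K V) := by
  clear hKop hKinv1 hKinv2
  simp only [decDs0] at hKs
  simp only [dec0s0] at hB
  simp only [decDsD] at hB'
  -- scalar facts
  have hqq : q - q⁻¹ ≠ 0 := by
    intro h
    have h1 : q = q⁻¹ := sub_eq_zero.mp h
    have h2 : q * q = 1 := by nth_rewrite 2 [h1]; exact mul_inv_cancel₀ hq0
    exact hq 2 (by norm_num) (by rw [pow_two]; exact h2)
  have hzpow_ne : ∀ n : ℤ, n ≠ 0 → q ^ n ≠ 1 := by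
    intro n hn h
    have h1 : q ^ (n.natAbs : ℤ) = 1 := by
      rcases Int.natAbs_eq n with he | he
      · rw [← he]; exact h
      · rw [he, zpow_neg] at h
        rw [inv_eq_one] at h; exact h
    rw [zpow_natCast] at h1
    exact hq n.natAbs (by omega) h1
  have hzpow_inj : ∀ x y : ℤ, q ^ x = q ^ y → x = y := by
    intro x y h
    by_contra hne
    refine hzpow_ne (x - y) (by omega) ?_
    rw [zpow_sub₀ hq0, h, div_self (zpow_ne_zero _ hq0)]
  -- out-of-range pieces are trivial
  have hbot1 : ∀ i : ℤ, ¬(0 ≤ i ∧ i ≤ (d:ℤ)) →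
      sumIcc Vs' ((d:ℤ)-i) (d:ℤ) ⊓ sumIcc Vs 0 ((d:ℤ)-i) = ⊥ := by
    intro i hi
    by_cases h : i < 0
    · rw [sumIcc_eq_bot Vs' (by omega), bot_inf_eq]
    · rw [sumIcc_eq_bot Vs (by omega), inf_bot_eq]
  have hbot2 : ∀ i : ℤ, ¬(0 ≤ i ∧ i ≤ (d:ℤ)) →
      sumIcc Vs' 0 i ⊓ sumIcc Vs 0 ((d:ℤ)-i) = ⊥ := by
    intro i hi
    by_cases h : i < 0
    · rw [sumIcc_eq_bot Vs' (by omega), bot_inf_eq]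
    · rw [sumIcc_eq_bot Vs (by omega), inf_bot_eq]
  have hbot3 : ∀ i : ℤ, ¬(0 ≤ i ∧ i ≤ (d:ℤ)) →
      sumIcc Vs' ((d:ℤ)-i) (d:ℤ) ⊓ sumIcc Vs i (d:ℤ) = ⊥ := by
    intro i hi
    by_cases h : i < 0
    · rw [sumIcc_eq_bot Vs' (by omega), bot_inf_eq]
    · rw [sumIcc_eq_bot Vs (by omega), inf_bot_eq]
  -- extended eigenvalue actions
  have hKs_all : ∀ i : ℤ, ∀ v ∈ sumIcc Vs' ((d:ℤ)-i) (d:ℤ) ⊓ sumIcc Vs 0 ((d:ℤ)-i),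
      Ks v = (q ^ (2*i-(d:ℤ))) • v := by
    intro i v hv
    by_cases hir : 0 ≤ i ∧ i ≤ (d:ℤ)
    · exact hKs i hir.1 hir.2 v hv
    · have hv0 : v = 0 := by
        rw [hbot1 i hir] at hv
        simpa using hv
      simp [hv0]
  have hKsinv_all : ∀ i : ℤ, ∀ v ∈ sumIcc Vs' ((d:ℤ)-i) (d:ℤ) ⊓ sumIcc Vs 0 ((d:ℤ)-i),
      Ksinv v = (q ^ ((d:ℤ)-2*i)) • v := by
    intro i v hv
    have h1 : Ks ((q ^ ((d:ℤ)-2*i)) • v) = v := by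
      rw [map_smul, hKs_all i v hv, smul_smul, zpow_mul_cancel hq0 _ _ (by ring), one_smul]
    calc Ksinv v = Ksinv (Ks ((q ^ ((d:ℤ)-2*i)) • v)) := by rw [h1]
      _ = (Ksinv * Ks) ((q ^ ((d:ℤ)-2*i)) • v) := rfl
      _ = (q ^ ((d:ℤ)-2*i)) • v := by rw [hKsinv2]; rfl
  have hB_all : ∀ i : ℤ, ∀ v ∈ sumIcc Vs' 0 i ⊓ sumIcc Vs 0 ((d:ℤ)-i),
      B v = (b * q ^ (2*i-(d:ℤ))) • v := by
    intro i v hv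
    by_cases hir : 0 ≤ i ∧ i ≤ (d:ℤ)
    · exact hB i hir.1 hir.2 v hv
    · have hv0 : v = 0 := by
        rw [hbot2 i hir] at hv
        simpa using hv
      simp [hv0]
  have hB'_all : ∀ i : ℤ, ∀ v ∈ sumIcc Vs' ((d:ℤ)-i) (d:ℤ) ⊓ sumIcc Vs i (d:ℤ),
      B' v = (b' * q ^ ((d:ℤ)-2*i)) • v := by
    intro i v hv
    by_cases hir : 0 ≤ i ∧ i ≤ (d:ℤ)
    · exact hB' i hir.1 hir.2 v hv
    · have hv0 : v = 0 := by
        rw [hbot3 i hir] at hv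
        simpa using hv
      simp [hv0]
  -- raising and lowering for the three decompositions
  have hraise1 : ∀ i : ℤ, ∀ v ∈ sumIcc Vs' ((d:ℤ)-i) (d:ℤ) ⊓ sumIcc Vs 0 ((d:ℤ)-i),
      A v - (a * q ^ ((d:ℤ)-2*i)) • v ∈
        sumIcc Vs' ((d:ℤ)-(i+1)) (d:ℤ) ⊓ sumIcc Vs 0 ((d:ℤ)-(i+1)) := by
    intro i v hv
    by_cases hir : 0 ≤ i ∧ i ≤ (d:ℤ)
    · obtain ⟨hv1, hv2⟩ := Submodule.mem_inf.mp hv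
      refine Submodule.mem_inf.mpr ⟨?_, ?_⟩
      · have hA : A v ∈ sumIcc Vs' ((d:ℤ)-i-1) (d:ℤ) :=
          trid_map_le_upper hTD.decompV' A hTD.trid' _ (Submodule.mem_map_of_mem hv1)
        have hs' : (a * q ^ ((d:ℤ)-2*i)) • v ∈ sumIcc Vs' ((d:ℤ)-i-1) (d:ℤ) :=
          Submodule.smul_mem _ _ (sumIcc_mono Vs' (by omega) le_rfl hv1)
        rw [show (d:ℤ)-(i+1) = (d:ℤ)-i-1 from by ring]
        exact Submodule.sub_mem _ hA hs'
      · have h := eig_map_le_lower Vs A θ hTD.eig 0 ((d:ℤ)-i) hv2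
        have hθv : θ ((d:ℤ)-i) = a * q ^ ((d:ℤ)-2*i) := by
          rw [hθ ((d:ℤ)-i) (by omega) (by omega),
            show 2*((d:ℤ)-i)-(d:ℤ) = (d:ℤ)-2*i from by ring]
        rw [hθv] at h
        rw [show (d:ℤ)-(i+1) = (d:ℤ)-i-1 from by ring]
        exact h
    · have hv0 : v = 0 := by
        rw [hbot1 i hir] at hv
        simpa using hv
      simp [hv0]
  have hlower1 : ∀ i : ℤ, ∀ v ∈ sumIcc Vs' ((d:ℤ)-i) (d:ℤ) ⊓ sumIcc Vs 0 ((d:ℤ)-i),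
      A' v - (a' * q ^ (2*i-(d:ℤ))) • v ∈
        sumIcc Vs' ((d:ℤ)-(i+(-1))) (d:ℤ) ⊓ sumIcc Vs 0 ((d:ℤ)-(i+(-1))) := by
    intro i v hv
    by_cases hir : 0 ≤ i ∧ i ≤ (d:ℤ)
    · obtain ⟨hv1, hv2⟩ := Submodule.mem_inf.mp hv
      refine Submodule.mem_inf.mpr ⟨?_, ?_⟩
      · have h := eig_map_le_upper Vs' A' θ' hTD.eig' ((d:ℤ)-i) (d:ℤ) hv1
        have hθv : θ' ((d:ℤ)-i) = a' * q ^ (2*i-(d:ℤ)) := by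
          rw [hθ' ((d:ℤ)-i) (by omega) (by omega),
            show (d:ℤ)-2*((d:ℤ)-i) = 2*i-(d:ℤ) from by ring]
        rw [hθv] at h
        rw [show (d:ℤ)-(i+(-1)) = (d:ℤ)-i+1 from by ring]
        exact h
      · have hA : A' v ∈ sumIcc Vs 0 ((d:ℤ)-i+1) :=
          trid_map_le_lower hTD.decompV A' hTD.trid _ (Submodule.mem_map_of_mem hv2)
        have hs' : (a' * q ^ (2*i-(d:ℤ))) • v ∈ sumIcc Vs 0 ((d:ℤ)-i+1) :=
          Submodule.smul_mem _ _ (sumIcc_mono Vs le_rfl (by omega) hv2)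
        rw [show (d:ℤ)-(i+(-1)) = (d:ℤ)-i+1 from by ring]
        exact Submodule.sub_mem _ hA hs'
    · have hv0 : v = 0 := by
        rw [hbot1 i hir] at hv
        simpa using hv
      simp [hv0]
  have hraise2 : ∀ i : ℤ, ∀ v ∈ sumIcc Vs' 0 i ⊓ sumIcc Vs 0 ((d:ℤ)-i),
      A v - (a * q ^ ((d:ℤ)-2*i)) • v ∈ sumIcc Vs' 0 (i+1) ⊓ sumIcc Vs 0 ((d:ℤ)-(i+1)) := by
    intro i v hv
    by_cases hir : 0 ≤ i ∧ i ≤ (d:ℤ)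
    · obtain ⟨hv1, hv2⟩ := Submodule.mem_inf.mp hv
      refine Submodule.mem_inf.mpr ⟨?_, ?_⟩
      · have hA : A v ∈ sumIcc Vs' 0 (i+1) :=
          trid_map_le_lower hTD.decompV' A hTD.trid' _ (Submodule.mem_map_of_mem hv1)
        have hs' : (a * q ^ ((d:ℤ)-2*i)) • v ∈ sumIcc Vs' 0 (i+1) :=
          Submodule.smul_mem _ _ (sumIcc_mono Vs' le_rfl (by omega) hv1)
        exact Submodule.sub_mem _ hA hs'
      · have h := eig_map_le_lower Vs A θ hTD.eig 0 ((d:ℤ)-i) hv2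
        have hθv : θ ((d:ℤ)-i) = a * q ^ ((d:ℤ)-2*i) := by
          rw [hθ ((d:ℤ)-i) (by omega) (by omega),
            show 2*((d:ℤ)-i)-(d:ℤ) = (d:ℤ)-2*i from by ring]
        rw [hθv] at h
        rw [show (d:ℤ)-(i+1) = (d:ℤ)-i-1 from by ring]
        exact h
    · have hv0 : v = 0 := by
        rw [hbot2 i hir] at hv
        simpa using hv
      simp [hv0]
  have hlower2 : ∀ i : ℤ, ∀ v ∈ sumIcc Vs' 0 i ⊓ sumIcc Vs 0 ((d:ℤ)-i),
      A' v - (a' * q ^ ((d:ℤ)-2*i)) • v ∈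
        sumIcc Vs' 0 (i+(-1)) ⊓ sumIcc Vs 0 ((d:ℤ)-(i+(-1))) := by
    intro i v hv
    by_cases hir : 0 ≤ i ∧ i ≤ (d:ℤ)
    · obtain ⟨hv1, hv2⟩ := Submodule.mem_inf.mp hv
      refine Submodule.mem_inf.mpr ⟨?_, ?_⟩
      · have h := eig_map_le_lower Vs' A' θ' hTD.eig' 0 i hv1
        have hθv : θ' i = a' * q ^ ((d:ℤ)-2*i) := hθ' i hir.1 hir.2
        rw [hθv] at h
        rw [show i+(-1) = i-1 from by ring]
        exact h
      · have hA : A' v ∈ sumIcc Vs 0 ((d:ℤ)-i+1) :=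
          trid_map_le_lower hTD.decompV A' hTD.trid _ (Submodule.mem_map_of_mem hv2)
        have hs' : (a' * q ^ ((d:ℤ)-2*i)) • v ∈ sumIcc Vs 0 ((d:ℤ)-i+1) :=
          Submodule.smul_mem _ _ (sumIcc_mono Vs le_rfl (by omega) hv2)
        rw [show (d:ℤ)-(i+(-1)) = (d:ℤ)-i+1 from by ring]
        exact Submodule.sub_mem _ hA hs'
    · have hv0 : v = 0 := by
        rw [hbot2 i hir] at hv
        simpa using hv
      simp [hv0]
  have hraise3 : ∀ i : ℤ, ∀ v ∈ sumIcc Vs' ((d:ℤ)-i) (d:ℤ) ⊓ sumIcc Vs i (d:ℤ),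
      A v - (a * q ^ (2*i-(d:ℤ))) • v ∈
        sumIcc Vs' ((d:ℤ)-(i+1)) (d:ℤ) ⊓ sumIcc Vs (i+1) (d:ℤ) := by
    intro i v hv
    by_cases hir : 0 ≤ i ∧ i ≤ (d:ℤ)
    · obtain ⟨hv1, hv2⟩ := Submodule.mem_inf.mp hv
      refine Submodule.mem_inf.mpr ⟨?_, ?_⟩
      · have hA : A v ∈ sumIcc Vs' ((d:ℤ)-i-1) (d:ℤ) :=
          trid_map_le_upper hTD.decompV' A hTD.trid' _ (Submodule.mem_map_of_mem hv1)
        have hs' : (a * q ^ (2*i-(d:ℤ))) • v ∈ sumIcc Vs' ((d:ℤ)-i-1) (d:ℤ) :=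
          Submodule.smul_mem _ _ (sumIcc_mono Vs' (by omega) le_rfl hv1)
        rw [show (d:ℤ)-(i+1) = (d:ℤ)-i-1 from by ring]
        exact Submodule.sub_mem _ hA hs'
      · have h := eig_map_le_upper Vs A θ hTD.eig i (d:ℤ) hv2
        have hθv : θ i = a * q ^ (2*i-(d:ℤ)) := hθ i hir.1 hir.2
        rw [hθv] at h
        exact h
    · have hv0 : v = 0 := by
        rw [hbot3 i hir] at hv
        simpa using hv
      simp [hv0]
  have hlower3 : ∀ i : ℤ, ∀ v ∈ sumIcc Vs' ((d:ℤ)-i) (d:ℤ) ⊓ sumIcc Vs i (d:ℤ),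
      A' v - (a' * q ^ (2*i-(d:ℤ))) • v ∈
        sumIcc Vs' ((d:ℤ)-(i+(-1))) (d:ℤ) ⊓ sumIcc Vs (i+(-1)) (d:ℤ) := by
    intro i v hv
    by_cases hir : 0 ≤ i ∧ i ≤ (d:ℤ)
    · obtain ⟨hv1, hv2⟩ := Submodule.mem_inf.mp hv
      refine Submodule.mem_inf.mpr ⟨?_, ?_⟩
      · have h := eig_map_le_upper Vs' A' θ' hTD.eig' ((d:ℤ)-i) (d:ℤ) hv1
        have hθv : θ' ((d:ℤ)-i) = a' * q ^ (2*i-(d:ℤ)) := by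
          rw [hθ' ((d:ℤ)-i) (by omega) (by omega),
            show (d:ℤ)-2*((d:ℤ)-i) = 2*i-(d:ℤ) from by ring]
        rw [hθv] at h
        rw [show (d:ℤ)-(i+(-1)) = (d:ℤ)-i+1 from by ring]
        exact h
      · have hA : A' v ∈ sumIcc Vs (i-1) (d:ℤ) :=
          trid_map_le_upper hTD.decompV A' hTD.trid _ (Submodule.mem_map_of_mem hv2)
        have hs' : (a' * q ^ (2*i-(d:ℤ))) • v ∈ sumIcc Vs (i-1) (d:ℤ) :=
          Submodule.smul_mem _ _ (sumIcc_mono Vs (by omega) le_rfl hv2)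
        rw [show i+(-1) = i-1 from by ring]
        exact Submodule.sub_mem _ hA hs'
    · have hv0 : v = 0 := by
        rw [hbot3 i hir] at hv
        simpa using hv
      simp [hv0]
  -- spanning
  have htop1 : (⨆ i : ℤ, (sumIcc Vs' ((d:ℤ)-i) (d:ℤ) ⊓ sumIcc Vs 0 ((d:ℤ)-i))) = ⊤ := by
    rcases pieces_bot_or_top A A' hTD.irred _
      (fun i => a * q ^ ((d:ℤ)-2*i)) (fun i => a' * q ^ (2*i-(d:ℤ))) 1 (-1)
      hraise1 hlower1 with h | h
    · exfalso
      have h0 : Vs 0 ≤ (⊥ : Submodule K V) := by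
        rw [← h]
        refine le_trans ?_ (le_iSup _ (d:ℤ))
        refine le_inf ?_ ?_
        · rw [show (d:ℤ)-(d:ℤ) = 0 from by ring, hTD.decompV'.sumIcc_eq_top]
          exact le_top
        · rw [show (d:ℤ)-(d:ℤ) = 0 from by ring, sumIcc_self]
      exact hTD.decompV.ne_bot 0 le_rfl (by omega) (le_bot_iff.mp h0)
    · exact h
  have htop2 : (⨆ i : ℤ, (sumIcc Vs' 0 i ⊓ sumIcc Vs 0 ((d:ℤ)-i))) = ⊤ := by
    rcases pieces_bot_or_top A A' hTD.irred _
      (fun i => a * q ^ ((d:ℤ)-2*i)) (fun i => a' * q ^ ((d:ℤ)-2*i)) 1 (-1)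
      hraise2 hlower2 with h | h
    · exfalso
      have h0 : Vs' 0 ≤ (⊥ : Submodule K V) := by
        rw [← h]
        refine le_trans ?_ (le_iSup _ (0:ℤ))
        refine le_inf ?_ ?_
        · rw [sumIcc_self]
        · rw [show (d:ℤ)-0 = (d:ℤ) from by ring, hTD.decompV.sumIcc_eq_top]
          exact le_top
      exact hTD.decompV'.ne_bot 0 le_rfl (by omega) (le_bot_iff.mp h0)
    · exact h
  have htop3 : (⨆ i : ℤ, (sumIcc Vs' ((d:ℤ)-i) (d:ℤ) ⊓ sumIcc Vs i (d:ℤ))) = ⊤ := by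
    rcases pieces_bot_or_top A A' hTD.irred _
      (fun i => a * q ^ (2*i-(d:ℤ))) (fun i => a' * q ^ (2*i-(d:ℤ))) 1 (-1)
      hraise3 hlower3 with h | h
    · exfalso
      have h0 : Vs' (d:ℤ) ≤ (⊥ : Submodule K V) := by
        rw [← h]
        refine le_trans ?_ (le_iSup _ (0:ℤ))
        refine le_inf ?_ ?_
        · rw [show (d:ℤ)-0 = (d:ℤ) from by ring, sumIcc_self]
        · rw [hTD.decompV.sumIcc_eq_top]
          exact le_top
      exact hTD.decompV'.ne_bot (d:ℤ) (by omega) le_rfl (le_bot_iff.mp h0)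
    · exact h
  -- relations 1 and 3
  have E1 : q • (A * Ks) - q⁻¹ • (Ks * A) = ((q - q⁻¹) * a) • (1 : Module.End K V) := by
    refine master_rel q _ htop1 Ks A (fun i => q ^ (2*i-(d:ℤ))) (fun i => a * q ^ ((d:ℤ)-2*i))
      1 a hKs_all hraise1 ?_ ?_
    · intro i; exact q_shift hq0 _ _ (by ring)
    · intro i
      calc a * q ^ ((d:ℤ)-2*i) * q ^ (2*i-(d:ℤ))
          = a * (q ^ ((d:ℤ)-2*i) * q ^ (2*i-(d:ℤ))) := by ring
        _ = a * 1 := by rw [zpow_mul_cancel hq0 _ _ (by ring)]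
        _ = a := mul_one a
  have E3 : q • (A' * Ksinv) - q⁻¹ • (Ksinv * A') = ((q - q⁻¹) * a') • (1 : Module.End K V) := by
    refine master_rel q _ htop1 Ksinv A' (fun i => q ^ ((d:ℤ)-2*i)) (fun i => a' * q ^ (2*i-(d:ℤ)))
      (-1) a' hKsinv_all hlower1 ?_ ?_
    · intro i; exact q_shift hq0 _ _ (by ring)
    · intro i
      calc a' * q ^ (2*i-(d:ℤ)) * q ^ ((d:ℤ)-2*i)
          = a' * (q ^ (2*i-(d:ℤ)) * q ^ ((d:ℤ)-2*i)) := by ring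
        _ = a' * 1 := by rw [zpow_mul_cancel hq0 _ _ (by ring)]
        _ = a' := mul_one a'
  -- bidiagonal action of Ks on Vs and of Ksinv on Vs'
  have hKsVs : ∀ m : ℤ, 0 ≤ m → m ≤ (d:ℤ) → ∀ v ∈ Vs m, Ks v ∈ Vs m ⊔ Vs (m-1) := by
    intro m hm1 hm2 v hv
    have hE := LinearMap.congr_fun E1 v
    simp only [LinearMap.sub_apply, LinearMap.smul_apply, Module.End.mul_apply,
      Module.End.one_apply] at hE
    have hAv : A v = (a * q ^ (2*m-(d:ℤ))) • v := by rw [hTD.eig m v hv, hθ m hm1 hm2]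
    rw [hAv, map_smul] at hE
    have h5 := eq_add_of_sub_eq hE
    rw [smul_smul] at h5
    have hX : A (Ks v) = (q⁻¹ * ((q - q⁻¹) * a)) • v
        + (q⁻¹ * (q⁻¹ * (a * q ^ (2*m-(d:ℤ))))) • (Ks v) := by
      calc A (Ks v) = q⁻¹ • (q • A (Ks v)) := by
            rw [smul_smul, inv_mul_cancel₀ hq0, one_smul]
        _ = q⁻¹ • (((q - q⁻¹) * a) • v + (q⁻¹ * (a * q ^ (2*m-(d:ℤ)))) • Ks v) := by rw [h5]
        _ = _ := by rw [smul_add, smul_smul, smul_smul]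
    have hc2 : q⁻¹ * (q⁻¹ * (a * q ^ (2*m-(d:ℤ)))) = a * q ^ (2*(m-1)-(d:ℤ)) := by
      rw [show (2*(m-1)-(d:ℤ)) = (-1) + ((-1) + (2*m-(d:ℤ))) from by ring,
        zpow_add₀ hq0, zpow_add₀ hq0, zpow_neg_one]
      ring
    rw [hc2] at hX
    have hkey : A (Ks v) - (a * q ^ (2*(m-1)-(d:ℤ))) • (Ks v)
        = (q⁻¹ * ((q - q⁻¹) * a)) • v := by
      rw [hX]; abel
    have hu : A (Ks v) - (a * q ^ (2*(m-1)-(d:ℤ))) • (Ks v) ∈ Vs m := by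
      rw [hkey]; exact Submodule.smul_mem _ _ hv
    refine comp_lemma hTD.decompV A θ hTD.eig _ m (m-1) ?_ (Ks v) hu
    intro m' h1 h2 h3
    rw [hθ m' h1 h2] at h3
    have h4 := hzpow_inj _ _ (mul_left_cancel₀ ha h3)
    omega
  have hKsinvVs' : ∀ m : ℤ, 0 ≤ m → m ≤ (d:ℤ) → ∀ v ∈ Vs' m, Ksinv v ∈ Vs' m ⊔ Vs' (m+1) := by
    intro m hm1 hm2 v hv
    have hE := LinearMap.congr_fun E3 v
    simp only [LinearMap.sub_apply, LinearMap.smul_apply, Module.End.mul_apply,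
      Module.End.one_apply] at hE
    have hAv : A' v = (a' * q ^ ((d:ℤ)-2*m)) • v := by rw [hTD.eig' m v hv, hθ' m hm1 hm2]
    rw [hAv, map_smul] at hE
    have h5 := eq_add_of_sub_eq hE
    rw [smul_smul] at h5
    have hX : A' (Ksinv v) = (q⁻¹ * ((q - q⁻¹) * a')) • v
        + (q⁻¹ * (q⁻¹ * (a' * q ^ ((d:ℤ)-2*m)))) • (Ksinv v) := by
      calc A' (Ksinv v) = q⁻¹ • (q • A' (Ksinv v)) := by
            rw [smul_smul, inv_mul_cancel₀ hq0, one_smul]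
        _ = q⁻¹ • (((q - q⁻¹) * a') • v + (q⁻¹ * (a' * q ^ ((d:ℤ)-2*m))) • Ksinv v) := by
            rw [h5]
        _ = _ := by rw [smul_add, smul_smul, smul_smul]
    have hc2 : q⁻¹ * (q⁻¹ * (a' * q ^ ((d:ℤ)-2*m))) = a' * q ^ ((d:ℤ)-2*(m+1)) := by
      rw [show ((d:ℤ)-2*(m+1)) = (-1) + ((-1) + ((d:ℤ)-2*m)) from by ring,
        zpow_add₀ hq0, zpow_add₀ hq0, zpow_neg_one]
      ring
    rw [hc2] at hX
    have hkey : A' (Ksinv v) - (a' * q ^ ((d:ℤ)-2*(m+1))) • (Ksinv v)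
        = (q⁻¹ * ((q - q⁻¹) * a')) • v := by
      rw [hX]; abel
    have hu : A' (Ksinv v) - (a' * q ^ ((d:ℤ)-2*(m+1))) • (Ksinv v) ∈ Vs' m := by
      rw [hkey]; exact Submodule.smul_mem _ _ hv
    refine comp_lemma hTD.decompV' A' θ' hTD.eig' _ m (m+1) ?_ (Ksinv v) hu
    intro m' h1 h2 h3
    rw [hθ' m' h1 h2] at h3
    have h4 := hzpow_inj _ _ (mul_left_cancel₀ ha' h3)
    omega
  have hKsQ' : ∀ i : ℤ, 0 ≤ i →
      Submodule.map Ks (sumIcc Vs i (d:ℤ)) ≤ sumIcc Vs (i-1) (d:ℤ) := by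
    intro i hi
    refine map_sumIcc_le Ks Vs i (d:ℤ) _ ?_
    intro j hj1 hj2 v hv
    have h := hKsVs j (by omega) hj2 v hv
    exact sup_le (le_sumIcc Vs (by omega) hj2) (le_sumIcc Vs (by omega) (by omega)) h
  have hKsinvP : ∀ i : ℤ, i ≤ (d:ℤ) →
      Submodule.map Ksinv (sumIcc Vs' 0 i) ≤ sumIcc Vs' 0 (i+1) := by
    intro i hi
    refine map_sumIcc_le Ksinv Vs' 0 i _ ?_
    intro j hj1 hj2 v hv
    have h := hKsinvVs' j hj1 (by omega) v hv
    exact sup_le (le_sumIcc Vs' hj1 (by omega)) (le_sumIcc Vs' (by omega) (by omega)) h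
  -- vanishing intersections and flags
  have Z1 : ∀ a0 : ℤ, sumIcc Vs' a0 (d:ℤ) ⊓ sumIcc Vs 0 (a0-1) = ⊥ := by
    have hZr : ∀ a0 : ℤ, ∀ v ∈ sumIcc Vs' a0 (d:ℤ) ⊓ sumIcc Vs 0 (a0-1),
        A v - θ (a0-1) • v ∈ sumIcc Vs' (a0+(-1)) (d:ℤ) ⊓ sumIcc Vs 0 ((a0+(-1))-1) := by
      intro a0 v hv
      obtain ⟨hv1, hv2⟩ := Submodule.mem_inf.mp hv
      refine Submodule.mem_inf.mpr ⟨?_, ?_⟩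
      · have hA : A v ∈ sumIcc Vs' (a0-1) (d:ℤ) :=
          trid_map_le_upper hTD.decompV' A hTD.trid' _ (Submodule.mem_map_of_mem hv1)
        have hs' : θ (a0-1) • v ∈ sumIcc Vs' (a0-1) (d:ℤ) :=
          Submodule.smul_mem _ _ (sumIcc_mono Vs' (by omega) le_rfl hv1)
        rw [show a0+(-1) = a0-1 from by ring]
        exact Submodule.sub_mem _ hA hs'
      · have h := eig_map_le_lower Vs A θ hTD.eig 0 (a0-1) hv2
        rw [show (a0+(-1))-1 = a0-1-1 from by ring]
        exact h
    have hZl : ∀ a0 : ℤ, ∀ v ∈ sumIcc Vs' a0 (d:ℤ) ⊓ sumIcc Vs 0 (a0-1),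
        A' v - θ' a0 • v ∈ sumIcc Vs' (a0+1) (d:ℤ) ⊓ sumIcc Vs 0 ((a0+1)-1) := by
      intro a0 v hv
      obtain ⟨hv1, hv2⟩ := Submodule.mem_inf.mp hv
      refine Submodule.mem_inf.mpr ⟨?_, ?_⟩
      · exact eig_map_le_upper Vs' A' θ' hTD.eig' a0 (d:ℤ) hv1
      · have hA : A' v ∈ sumIcc Vs 0 (a0-1+1) :=
          trid_map_le_lower hTD.decompV A' hTD.trid _ (Submodule.mem_map_of_mem hv2)
        have hs' : θ' a0 • v ∈ sumIcc Vs 0 (a0-1+1) :=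
          Submodule.smul_mem _ _ (sumIcc_mono Vs le_rfl (by omega) hv2)
        rw [show (a0+1)-1 = a0-1+1 from by ring]
        exact Submodule.sub_mem _ hA hs'
    rcases pieces_bot_or_top A A' hTD.irred _
      (fun a0 => θ (a0-1)) (fun a0 => θ' a0) (-1) 1 hZr hZl with h | h
    · intro a0
      exact le_bot_iff.mp (le_trans (le_iSup (fun a0 => sumIcc Vs' a0 (d:ℤ) ⊓ sumIcc Vs 0 (a0-1)) a0) (le_of_eq h))
    · exfalso
      have hled : (⊤ : Submodule K V) ≤ sumIcc Vs 0 ((d:ℤ)-1) := by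
        rw [← h]
        refine iSup_le fun a0 => ?_
        by_cases ha0 : a0 ≤ (d:ℤ)
        · exact le_trans inf_le_right (sumIcc_mono Vs le_rfl (by omega))
        · refine le_trans inf_le_left ?_
          rw [sumIcc_eq_bot Vs' (by omega)]
          exact bot_le
      have hVsd : Vs (d:ℤ) ≤ ⨆ j, ⨆ _ : j ≠ (d:ℤ), Vs j := by
        refine le_trans (le_trans le_top hled) (sumIcc_le Vs fun j hj1 hj2 => ?_)
        exact le_iSup_of_le j (le_iSup_of_le (by omega) le_rfl)
      have hdis := hTD.decompV.indep (d:ℤ)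
      have hbot : Vs (d:ℤ) = ⊥ :=
        eq_bot_iff.mpr (le_trans (le_inf le_rfl hVsd) hdis.le_bot)
      exact hTD.decompV.ne_bot (d:ℤ) (by omega) le_rfl hbot
  have FE1 : ∀ i : ℤ, sumIcc Vs' ((d:ℤ)-i) (d:ℤ) ≤
      ⨆ j ∈ Set.Iic i, (sumIcc Vs' ((d:ℤ)-j) (d:ℤ) ⊓ sumIcc Vs 0 ((d:ℤ)-j)) := by
    intro i
    have hsup : (⊤ : Submodule K V) ≤
        (⨆ j ∈ Set.Iic i, (sumIcc Vs' ((d:ℤ)-j) (d:ℤ) ⊓ sumIcc Vs 0 ((d:ℤ)-j)))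
          ⊔ sumIcc Vs 0 ((d:ℤ)-i-1) := by
      rw [← htop1]
      refine iSup_le fun j => ?_
      by_cases hj : j ≤ i
      · exact le_sup_of_le_left
          (le_biSup (fun j => sumIcc Vs' ((d:ℤ)-j) (d:ℤ) ⊓ sumIcc Vs 0 ((d:ℤ)-j))
            (Set.mem_Iic.mpr hj))
      · exact le_sup_of_le_right (le_trans inf_le_right (sumIcc_mono Vs le_rfl (by omega)))
    have hSle : (⨆ j ∈ Set.Iic i, (sumIcc Vs' ((d:ℤ)-j) (d:ℤ) ⊓ sumIcc Vs 0 ((d:ℤ)-j)))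
        ≤ sumIcc Vs' ((d:ℤ)-i) (d:ℤ) := by
      refine iSup₂_le fun j hj => ?_
      have hj' : j ≤ i := hj
      exact le_trans inf_le_left (sumIcc_mono Vs' (by omega) le_rfl)
    have hZ : sumIcc Vs 0 ((d:ℤ)-i-1) ⊓ sumIcc Vs' ((d:ℤ)-i) (d:ℤ) = ⊥ := by
      rw [inf_comm]
      exact Z1 ((d:ℤ)-i)
    calc sumIcc Vs' ((d:ℤ)-i) (d:ℤ)
        = ((⨆ j ∈ Set.Iic i, (sumIcc Vs' ((d:ℤ)-j) (d:ℤ) ⊓ sumIcc Vs 0 ((d:ℤ)-j)))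
            ⊔ sumIcc Vs 0 ((d:ℤ)-i-1)) ⊓ sumIcc Vs' ((d:ℤ)-i) (d:ℤ) :=
          (inf_eq_right.mpr (le_trans le_top hsup)).symm
      _ = (⨆ j ∈ Set.Iic i, (sumIcc Vs' ((d:ℤ)-j) (d:ℤ) ⊓ sumIcc Vs 0 ((d:ℤ)-j)))
            ⊔ (sumIcc Vs 0 ((d:ℤ)-i-1) ⊓ sumIcc Vs' ((d:ℤ)-i) (d:ℤ)) :=
          sup_inf_assoc_of_le _ hSle
      _ ≤ _ := by rw [hZ, sup_bot_eq]
  have FE2 : ∀ i : ℤ, sumIcc Vs 0 ((d:ℤ)-i) ≤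
      ⨆ j ∈ Set.Ici i, (sumIcc Vs' ((d:ℤ)-j) (d:ℤ) ⊓ sumIcc Vs 0 ((d:ℤ)-j)) := by
    intro i
    have hsup : (⊤ : Submodule K V) ≤
        (⨆ j ∈ Set.Ici i, (sumIcc Vs' ((d:ℤ)-j) (d:ℤ) ⊓ sumIcc Vs 0 ((d:ℤ)-j)))
          ⊔ sumIcc Vs' ((d:ℤ)-i+1) (d:ℤ) := by
      rw [← htop1]
      refine iSup_le fun j => ?_
      by_cases hj : i ≤ j
      · exact le_sup_of_le_left
          (le_biSup (fun j => sumIcc Vs' ((d:ℤ)-j) (d:ℤ) ⊓ sumIcc Vs 0 ((d:ℤ)-j))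
            (Set.mem_Ici.mpr hj))
      · exact le_sup_of_le_right (le_trans inf_le_left (sumIcc_mono Vs' (by omega) le_rfl))
    have hSle : (⨆ j ∈ Set.Ici i, (sumIcc Vs' ((d:ℤ)-j) (d:ℤ) ⊓ sumIcc Vs 0 ((d:ℤ)-j)))
        ≤ sumIcc Vs 0 ((d:ℤ)-i) := by
      refine iSup₂_le fun j hj => ?_
      have hj' : i ≤ j := hj
      exact le_trans inf_le_right (sumIcc_mono Vs le_rfl (by omega))
    have hZ : sumIcc Vs' ((d:ℤ)-i+1) (d:ℤ) ⊓ sumIcc Vs 0 ((d:ℤ)-i) = ⊥ := by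
      have h := Z1 ((d:ℤ)-i+1)
      rw [show (d:ℤ)-i+1-1 = (d:ℤ)-i from by ring] at h
      exact h
    calc sumIcc Vs 0 ((d:ℤ)-i)
        = ((⨆ j ∈ Set.Ici i, (sumIcc Vs' ((d:ℤ)-j) (d:ℤ) ⊓ sumIcc Vs 0 ((d:ℤ)-j)))
            ⊔ sumIcc Vs' ((d:ℤ)-i+1) (d:ℤ)) ⊓ sumIcc Vs 0 ((d:ℤ)-i) :=
          (inf_eq_right.mpr (le_trans le_top hsup)).symm
      _ = (⨆ j ∈ Set.Ici i, (sumIcc Vs' ((d:ℤ)-j) (d:ℤ) ⊓ sumIcc Vs 0 ((d:ℤ)-j)))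
            ⊔ (sumIcc Vs' ((d:ℤ)-i+1) (d:ℤ) ⊓ sumIcc Vs 0 ((d:ℤ)-i)) :=
          sup_inf_assoc_of_le _ hSle
      _ ≤ _ := by rw [hZ, sup_bot_eq]
  -- shifts of Ksinv, Ks relative to the decompositions of B, B'
  have hshift2 : ∀ i : ℤ, ∀ v ∈ sumIcc Vs' 0 i ⊓ sumIcc Vs 0 ((d:ℤ)-i),
      Ksinv v - (q ^ ((d:ℤ)-2*i)) • v ∈ sumIcc Vs' 0 (i+1) ⊓ sumIcc Vs 0 ((d:ℤ)-(i+1)) := by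
    intro i v hv
    by_cases hir : 0 ≤ i ∧ i ≤ (d:ℤ)
    · obtain ⟨hv1, hv2⟩ := Submodule.mem_inf.mp hv
      refine Submodule.mem_inf.mpr ⟨?_, ?_⟩
      · have h1 : Ksinv v ∈ sumIcc Vs' 0 (i+1) :=
          hKsinvP i hir.2 (Submodule.mem_map_of_mem hv1)
        have h2 : (q ^ ((d:ℤ)-2*i)) • v ∈ sumIcc Vs' 0 (i+1) :=
          Submodule.smul_mem _ _ (sumIcc_mono Vs' le_rfl (by omega) hv1)
        exact Submodule.sub_mem _ h1 h2
      · have hvS := FE2 i hv2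
        have hmap : Submodule.map (Ksinv - (q ^ ((d:ℤ)-2*i)) • (1 : Module.End K V))
            (⨆ j ∈ Set.Ici i, (sumIcc Vs' ((d:ℤ)-j) (d:ℤ) ⊓ sumIcc Vs 0 ((d:ℤ)-j)))
            ≤ sumIcc Vs 0 ((d:ℤ)-(i+1)) := by
          refine map_biSup_Ici_le _ _ _ _ ?_
          intro j hj u hu
          have hx : (Ksinv - (q ^ ((d:ℤ)-2*i)) • (1 : Module.End K V)) u
              = (q ^ ((d:ℤ)-2*j) - q ^ ((d:ℤ)-2*i)) • u := by
            simp [LinearMap.sub_apply, hKsinv_all j u hu, sub_smul]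
          rw [hx]
          by_cases hji : j = i
          · subst hji; simp
          · refine Submodule.smul_mem _ _
              (le_trans inf_le_right (sumIcc_mono Vs le_rfl (by omega)) hu)
        have h := hmap (Submodule.mem_map_of_mem hvS)
        simpa [LinearMap.sub_apply] using h
    · have hv0 : v = 0 := by
        rw [hbot2 i hir] at hv
        simpa using hv
      simp [hv0]
  have hshift4 : ∀ i : ℤ, ∀ v ∈ sumIcc Vs' ((d:ℤ)-i) (d:ℤ) ⊓ sumIcc Vs i (d:ℤ),
      Ks v - (q ^ (2*i-(d:ℤ))) • v ∈
        sumIcc Vs' ((d:ℤ)-(i+(-1))) (d:ℤ) ⊓ sumIcc Vs (i+(-1)) (d:ℤ) := by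
    intro i v hv
    by_cases hir : 0 ≤ i ∧ i ≤ (d:ℤ)
    · obtain ⟨hv1, hv2⟩ := Submodule.mem_inf.mp hv
      refine Submodule.mem_inf.mpr ⟨?_, ?_⟩
      · have hvS := FE1 i hv1
        have hmap : Submodule.map (Ks - (q ^ (2*i-(d:ℤ))) • (1 : Module.End K V))
            (⨆ j ∈ Set.Iic i, (sumIcc Vs' ((d:ℤ)-j) (d:ℤ) ⊓ sumIcc Vs 0 ((d:ℤ)-j)))
            ≤ sumIcc Vs' ((d:ℤ)-i+1) (d:ℤ) := by
          refine map_biSup_Iic_le _ _ _ _ ?_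
          intro j hj u hu
          have hx : (Ks - (q ^ (2*i-(d:ℤ))) • (1 : Module.End K V)) u
              = (q ^ (2*j-(d:ℤ)) - q ^ (2*i-(d:ℤ))) • u := by
            simp [LinearMap.sub_apply, hKs_all j u hu, sub_smul]
          rw [hx]
          by_cases hji : j = i
          · subst hji; simp
          · refine Submodule.smul_mem _ _
              (le_trans inf_le_left (sumIcc_mono Vs' (by omega) le_rfl) hu)
        have h := hmap (Submodule.mem_map_of_mem hvS)
        rw [show (d:ℤ)-(i+(-1)) = (d:ℤ)-i+1 from by ring]
        simpa [LinearMap.sub_apply] using h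
      · have h1 : Ks v ∈ sumIcc Vs (i-1) (d:ℤ) :=
          hKsQ' i hir.1 (Submodule.mem_map_of_mem hv2)
        have h2 : (q ^ (2*i-(d:ℤ))) • v ∈ sumIcc Vs (i-1) (d:ℤ) :=
          Submodule.smul_mem _ _ (sumIcc_mono Vs (by omega) le_rfl hv2)
        rw [show i+(-1) = i-1 from by ring]
        exact Submodule.sub_mem _ h1 h2
    · have hv0 : v = 0 := by
        rw [hbot3 i hir] at hv
        simpa using hv
      simp [hv0]
  -- relations 2 and 4
  have E2 : q • (Ksinv * B) - q⁻¹ • (B * Ksinv) = ((q - q⁻¹) * b) • (1 : Module.End K V) := by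
    refine master_rel q _ htop2 B Ksinv (fun i => b * q ^ (2*i-(d:ℤ))) (fun i => q ^ ((d:ℤ)-2*i))
      1 b hB_all hshift2 ?_ ?_
    · intro i; exact q_shift' hq0 b _ _ (by ring)
    · intro i
      calc q ^ ((d:ℤ)-2*i) * (b * q ^ (2*i-(d:ℤ)))
          = b * (q ^ ((d:ℤ)-2*i) * q ^ (2*i-(d:ℤ))) := by ring
        _ = b * 1 := by rw [zpow_mul_cancel hq0 _ _ (by ring)]
        _ = b := mul_one b
  have E4 : q • (Ks * B') - q⁻¹ • (B' * Ks) = ((q - q⁻¹) * b') • (1 : Module.End K V) := by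
    refine master_rel q _ htop3 B' Ks (fun i => b' * q ^ ((d:ℤ)-2*i)) (fun i => q ^ (2*i-(d:ℤ)))
      (-1) b' hB'_all hshift4 ?_ ?_
    · intro i; exact q_shift' hq0 b' _ _ (by ring)
    · intro i
      calc q ^ (2*i-(d:ℤ)) * (b' * q ^ ((d:ℤ)-2*i))
          = b' * (q ^ (2*i-(d:ℤ)) * q ^ ((d:ℤ)-2*i)) := by ring
        _ = b' * 1 := by rw [zpow_mul_cancel hq0 _ _ (by ring)]
        _ = b' := mul_one b'
  refine ⟨?_, ?_, ?_, ?_⟩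
  · rw [E1, smul_smul, inv_mul_cancel_left₀ hqq]
  · rw [E2, smul_smul, inv_mul_cancel_left₀ hqq]
  · rw [E3, smul_smul, inv_mul_cancel_left₀ hqq]
  · rw [E4, smul_smul, inv_mul_cancel_left₀ hqq]
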